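/- Let (E_1,...,E_d) be a d-dimensional POVM with d outcomes such that ‖E_j‖ ≥ 1 for all j ∈ {1,...,d}, where ‖·‖ denotes the operator norm. Then there exists an orthonormal basis (ψ_1,...,ψ_d) of ℂ^d such that E_j = ψ_j ψ_j* (the rank-one orthogonal projection onto ℂψ_j) for all j. -/

import Mathlib

open Matrix
open scoped ComplexOrder

-- `‖·‖` is the L2 operator norm (largest singular value) on matrices.
open scoped Matrix.Norms.L2Operator

open scoped ENNReal NNReal

/-- A `d`-dimensional POVM with `Z` outcomes. -/
def IsPOVM {d Z : ℕ} (E : Fin Z → Matrix (Fin d) (Fin d) ℂ) : Prop :=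
  (∀ z, (E z).PosSemidef) ∧ ∑ z, E z = 1

/-- The rank-one matrix `ψψ*` with entries `ψ_k ⬝ conj (ψ_l)`. -/
def outer {d : ℕ} (ψ : Fin d → ℂ) : Matrix (Fin d) (Fin d) ℂ :=
  Matrix.of fun k l => ψ k * (starRingEnd ℂ) (ψ l)

noncomputable instance mcstar {d : ℕ} : CStarAlgebra (Matrix (Fin d) (Fin d) ℂ) := Matrix.instCStarAlgebra

lemma exists_unit_eigvec {d : ℕ} (A : Matrix (Fin d) (Fin d) ℂ) (hA : A.PosSemidef)
    (hle : (1 - A).PosSemidef) (hn : 1 ≤ ‖A‖) :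
    ∃ v : Fin d → ℂ, star v ⬝ᵥ v = 1 ∧ A *ᵥ v = v := by
  have herm := hA.isHermitian
  have hd : 0 < d := by
    rcases Nat.eq_zero_or_pos d with h | h
    · subst h
      have : A = 0 := Subsingleton.elim _ _
      rw [this, norm_zero] at hn; linarith
    · exact h
  haveI : Nonempty (Fin d) := ⟨⟨0, hd⟩⟩
  haveI : Nontrivial (Matrix (Fin d) (Fin d) ℂ) := by
    refine ⟨1, 0, fun h => ?_⟩
    simpa using congrFun (congrFun h ⟨0, hd⟩) ⟨0, hd⟩
  -- eigenvalues are ≤ 1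
  have hev_le : ∀ i, herm.eigenvalues i ≤ 1 := by
    intro i
    set u : Fin d → ℂ := ⇑(herm.eigenvectorBasis i) with hu
    have h1 : star u ⬝ᵥ u = 1 := by
      have := herm.eigenvectorBasis.orthonormal.1 i
      have h2 : (inner ℂ (herm.eigenvectorBasis i) (herm.eigenvectorBasis i) : ℂ) = 1 := by
        rw [inner_self_eq_norm_sq_to_K, this]; norm_num
      rw [EuclideanSpace.inner_eq_star_dotProduct, dotProduct_comm] at h2; exact h2
    have h0 : 0 ≤ Complex.re (star u ⬝ᵥ (1 - A) *ᵥ u) := hle.re_dotProduct_nonneg u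
    have heq := herm.eigenvalues_eq i
    rw [sub_mulVec, one_mulVec, dotProduct_sub, h1] at h0
    simp only [Complex.sub_re, Complex.one_re] at h0
    rw [heq]
    simpa using h0
  -- some eigenvalue equals 1
  have hself : IsSelfAdjoint A := herm
  have hrad := hself.spectralRadius_eq_nnnorm
  obtain ⟨z, hz, hznorm⟩ :=
    spectrum.exists_nnnorm_eq_spectralRadius_of_nonempty (spectrum.nonempty A)
  have hz1 : 1 ≤ ‖z‖ := by
    have : (1 : ℝ≥0∞) ≤ (‖A‖₊ : ℝ≥0∞) := by
      rw [← ENNReal.coe_one, ENNReal.coe_le_coe]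
      rw [← NNReal.coe_le_coe]
      simpa using hn
    rw [← hrad, ← hznorm] at this
    rw [← ENNReal.coe_one, ENNReal.coe_le_coe, ← NNReal.coe_le_coe] at this
    simpa using this
  have hzre : z = z.re := hself.mem_spectrum_eq_re hz
  have hre_mem : (z.re : ℝ) ∈ spectrum ℝ A := by
    rw [← spectrum.algebraMap_mem_iff ℂ]
    simpa [Complex.coe_algebraMap] using hzre ▸ hz
  rw [herm.spectrum_real_eq_range_eigenvalues] at hre_mem
  obtain ⟨i, hi⟩ := hre_mem
  have hge : (1 : ℝ) ≤ herm.eigenvalues i := by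
    rw [hi]
    calc (1:ℝ) ≤ ‖z‖ := hz1
    _ = |z.re| := by rw [hzre]; simp
    _ = z.re := abs_of_nonneg (by
        by_contra hneg
        push_neg at hneg
        have := hA.eigenvalues_nonneg i
        rw [hi] at this; linarith)
  have hone : herm.eigenvalues i = 1 := le_antisymm (hev_le i) hge
  refine ⟨⇑(herm.eigenvectorBasis i), ?_, ?_⟩
  · have := herm.eigenvectorBasis.orthonormal.1 i
    have h2 : (inner ℂ (herm.eigenvectorBasis i) (herm.eigenvectorBasis i) : ℂ) = 1 := by
      rw [inner_self_eq_norm_sq_to_K, this]; norm_num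
    rw [EuclideanSpace.inner_eq_star_dotProduct, dotProduct_comm] at h2; exact h2
  · have := herm.mulVec_eigenvectorBasis i
    rw [hone] at this
    simpa using this


lemma sum_mulVec' {n m : Type*} [Fintype n] [DecidableEq n] {ι : Type*} (s : Finset ι)
    (M : ι → Matrix m n ℂ) (x : n → ℂ) :
    (∑ k ∈ s, M k) *ᵥ x = ∑ k ∈ s, M k *ᵥ x := by
  induction s using Finset.cons_induction with
  | empty => simp [Matrix.zero_mulVec]
  | cons a s ha ih => simp only [Finset.sum_cons, Matrix.add_mulVec, ih]

lemma dot_sum {n : Type*} [Fintype n] {ι : Type*} (s : Finset ι) (v : n → ℂ) (f : ι → n → ℂ) :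
    v ⬝ᵥ (∑ k ∈ s, f k) = ∑ k ∈ s, v ⬝ᵥ f k := by
  simp only [dotProduct, Finset.sum_apply, Finset.mul_sum]
  exact Finset.sum_comm

theorem stmt9 {d : ℕ} (E : Fin d → Matrix (Fin d) (Fin d) ℂ) (hE : IsPOVM E)
    (hnorm : ∀ j, 1 ≤ ‖E j‖) :
    ∃ ψ : Fin d → (Fin d → ℂ),
      (∀ j k, (∑ l, (starRingEnd ℂ) (ψ j l) * ψ k l) = if j = k then 1 else 0) ∧
      ∀ j, E j = outer (ψ j) := by
  obtain ⟨hPSD, hsum⟩ := hE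
  rcases Nat.eq_zero_or_pos d with hd0 | hd
  · subst hd0
    exact ⟨fun _ _ => 0, fun j => j.elim0, fun j => j.elim0⟩
  haveI : Nonempty (Fin d) := ⟨⟨0, hd⟩⟩
  -- 1 - E j is PSD
  have hle : ∀ j, (1 - E j).PosSemidef := by
    intro j
    have h1 : (1 : Matrix (Fin d) (Fin d) ℂ) - E j = ∑ i ∈ Finset.univ.erase j, E i := by
      rw [Finset.sum_erase_eq_sub (Finset.mem_univ j), hsum]
    rw [h1]
    exact Finset.sum_induction _ _ (fun a b ha hb => ha.add hb) Matrix.PosSemidef.zero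
      (fun i _ => hPSD i)
  -- pick eigenvectors
  choose v hv1 hv2 using fun j => exists_unit_eigvec (E j) (hPSD j) (hle j) (hnorm j)
  -- E i kills v j for i ≠ j
  have hkill : ∀ i j, i ≠ j → E i *ᵥ v j = 0 := by
    intro i j hij
    have hzero : ∑ k ∈ Finset.univ.erase j, star (v j) ⬝ᵥ E k *ᵥ v j = 0 := by
      have : ∑ k ∈ Finset.univ.erase j, star (v j) ⬝ᵥ E k *ᵥ v j
          = star (v j) ⬝ᵥ (1 - E j) *ᵥ v j := by
        rw [← dot_sum]
        congr 1
        rw [← sum_mulVec']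
        congr 1
        rw [Finset.sum_erase_eq_sub (Finset.mem_univ j), hsum]
      rw [this, sub_mulVec, one_mulVec, dotProduct_sub, hv2 j, hv1 j, sub_self]
    have hterm : star (v j) ⬝ᵥ E i *ᵥ v j = 0 := by
      refine (Finset.sum_eq_zero_iff_of_nonneg ?_).mp hzero i
        (Finset.mem_erase.mpr ⟨hij, Finset.mem_univ i⟩)
      intro k _
      exact (hPSD k).dotProduct_mulVec_nonneg (v j)
    exact ((hPSD i).dotProduct_mulVec_zero_iff (v j)).mp hterm
  -- orthonormality
  have hortho : ∀ j k, star (v j) ⬝ᵥ v k = if j = k then 1 else 0 := by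
    intro j k
    by_cases h : j = k
    · subst h; simp [hv1 j]
    · simp only [h, if_false]
      have : star (v j) ⬝ᵥ v k = star (v j) ⬝ᵥ E k *ᵥ v k := by rw [hv2 k]
      have h0 : star (v j) ᵥ* E k = 0 := by
        have hk := hkill k j (Ne.symm h)
        calc star (v j) ᵥ* E k = star (v j) ᵥ* (E k)ᴴ := by conv_lhs => rw [← (hPSD k).1]
        _ = star (E k *ᵥ v j) := (Matrix.star_mulVec _ _).symm
        _ = 0 := by rw [hk]; simp
      rw [this, dotProduct_mulVec, h0, zero_dotProduct]
  -- action on basis vectors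
  have hEmul : ∀ j k, E j *ᵥ v k = if j = k then v j else 0 := by
    intro j k
    by_cases h : j = k
    · subst h; simp [hv2 j]
    · simp [h, hkill j k h]
  have houter : ∀ j k, outer (v j) *ᵥ v k = if j = k then v j else 0 := by
    intro j k
    have : outer (v j) *ᵥ v k = (star (v j) ⬝ᵥ v k) • v j := by
      ext i
      simp [outer, mulVec, dotProduct, Finset.mul_sum, mul_comm, mul_left_comm]
    rw [this, hortho j k]
    by_cases h : j = k <;> simp [h]
  -- linear independence
  have hli : LinearIndependent ℂ v := by
    rw [Fintype.linearIndependent_iff]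
    intro g hg i
    have := congrArg (fun w => star (v i) ⬝ᵥ w) hg
    simp only [dotProduct_zero] at this
    rw [show star (v i) ⬝ᵥ (∑ k, g k • v k) = ∑ k, g k * (star (v i) ⬝ᵥ v k) by
      rw [dot_sum]; exact Finset.sum_congr rfl fun k _ => by
        rw [dotProduct_smul]; rfl] at this
    simpa [hortho, eq_comm] using this
  have hcard : Fintype.card (Fin d) = Module.finrank ℂ (Fin d → ℂ) := by
    simp
  let B : Module.Basis (Fin d) ℂ (Fin d → ℂ) := basisOfLinearIndependentOfCardEqFinrank hli hcard
  refine ⟨v, ?_, ?_⟩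
  · intro j k
    have := hortho j k
    simpa [dotProduct] using this
  · intro j
    apply Matrix.toLin'.injective
    apply B.ext
    intro k
    rw [show B k = v k from coe_basisOfLinearIndependentOfCardEqFinrank hli hcard ▸ rfl]
    simp only [Matrix.toLin'_apply]
    rw [hEmul j k, houter j k]
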